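/- For every α > 0 there exists θ ∈ (0,1) such that Γ(α) = √(2π) · α^{α - 1/2} · exp(-α + θ/(12α)). -/

import Mathlib

open Real Filter Topology Finset


lemma g_bounds {y : ℝ} (hy : 0 < y) :
    0 < (y + 1/2) * (Real.log (y+1) - Real.log y) - 1 ∧
    (y + 1/2) * (Real.log (y+1) - Real.log y) - 1 < 1/(12*y) - 1/(12*(y+1)) := by
  set t : ℝ := 1 / (2*y + 1) with ht
  have ht0 : 0 < t := by positivity
  have ht1 : t < 1 := by
    rw [ht, div_lt_one (by linarith)]; linarith
  have hlog : Real.log (y+1) - Real.log y = Real.log (1 + y⁻¹) := by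
    rw [← Real.log_div (by linarith) hy.ne']
    congr 1
    field_simp
  have h0 := Real.hasSum_log_one_add_inv hy
  have h1 := h0.mul_left (y + 1/2)
  set f : ℕ → ℝ := fun k => (y + 1/2) * ((2:ℝ) * (1/(2*(k:ℝ)+1)) * (1/(2*y+1)) ^ (2*k+1)) with hf
  have hf0 : f 0 = 1 := by
    simp only [hf]
    push_cast
    field_simp
    ring
  have key : (2*y+1) * t = 1 := by rw [ht]; field_simp
  have h2 : HasSum (fun n => f (n+1)) ((y + 1/2) * Real.log (1 + y⁻¹) - 1) := by
    have := (hasSum_nat_add_iff' (f := f) 1).mpr h1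
    simpa [hf0] using this
  have hterm : ∀ n : ℕ, f (n+1) = (1/(2*(n:ℝ)+3)) * t ^ (2*n+2) := by
    intro n
    simp only [hf]
    rw [← ht, show 2*(n+1)+1 = (2*n+2)+1 by ring, pow_succ]
    push_cast
    linear_combination (1/(2*(n:ℝ)+3) * t^(2*n+2)) * key
  constructor
  · rw [hlog]
    have : (0:ℝ) < (y + 1/2) * Real.log (1 + y⁻¹) - 1 := by
      refine hasSum_lt (f := fun _ : ℕ => (0:ℝ)) (i := 0) ?_ ?_ hasSum_zero h2
      · intro n
        show (0:ℝ) ≤ f (n+1)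
        rw [hterm n]; positivity
      · show (0:ℝ) < f (0+1)
        rw [hterm 0]; positivity
    linarith
  · rw [hlog]
    have hgeo : HasSum (fun n : ℕ => (t^2/3) * (t^2)^n) ((t^2/3) * (1/(1 - t^2))) := by
      have := hasSum_geometric_of_lt_one (r := t^2) (by positivity) (by nlinarith)
      rw [one_div]; exact this.mul_left (t^2/3)
    have hlt : (y + 1/2) * Real.log (1 + y⁻¹) - 1 < (t^2/3) * (1/(1 - t^2)) := by
      refine hasSum_lt (i := 1) ?_ ?_ h2 hgeo
      · intro n
        show f (n+1) ≤ (t^2/3) * (t^2)^n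
        rw [hterm n]
        have h4 : (t^2)^n = t^(2*n) := by rw [← pow_mul]
        rw [h4, show 2*n+2 = 2 + 2*n by ring, pow_add]
        have hn : (0:ℝ) ≤ (n:ℝ) := n.cast_nonneg
        have h3 : (1/(2*(n:ℝ)+3)) ≤ 1/3 :=
          one_div_le_one_div_of_le (by norm_num) (by linarith)
        calc (1/(2*(n:ℝ)+3)) * (t^2 * t^(2*n)) ≤ (1/3) * (t^2 * t^(2*n)) := by
              apply mul_le_mul_of_nonneg_right h3 (by positivity)
          _ = t^2/3 * t^(2*n) := by ring
      · show f (1+1) < (t^2/3) * (t^2)^1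
        rw [hterm 1, pow_one]
        have h5 : (1/(2*((1:ℕ):ℝ)+3) : ℝ) * t^(2*1+2) = t^4/5 := by push_cast; ring
        rw [h5]
        have hp : (0:ℝ) < t^4 := by positivity
        nlinarith
    have heq : (t^2/3) * (1/(1 - t^2)) = 1/(12*y) - 1/(12*(y+1)) := by
      rw [ht]
      have h2y : (2*y+1 : ℝ) ≠ 0 := by positivity
      have hy' : (y:ℝ) ≠ 0 := hy.ne'
      have hy1 : (y+1:ℝ) ≠ 0 := by linarith
      have hden : (4*y^2+4*y : ℝ) ≠ 0 := by nlinarith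
      have e1 : 1 - (1/(2*y+1))^2 = (4*y^2+4*y)/((2*y+1)^2) := by
        field_simp; ring
      rw [e1]
      field_simp
      ring
    linarith [heq ▸ hlt]


-- L1: telescoping identity
lemma telescope (x : ℝ) (n : ℕ) :
    ∑ k ∈ range n, ((x + k + 1/2) * (Real.log (x+k+1) - Real.log (x+k)) - 1)
      = (x + n - 1/2) * Real.log (x+n) - (x - 1/2) * Real.log x
        - ∑ k ∈ range n, Real.log (x+k) - n := by
  induction n with
  | zero => simp
  | succ m ih =>
    rw [Finset.sum_range_succ, ih, Finset.sum_range_succ]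
    push_cast
    ring

-- L2: Stirling error term tends to 0
lemma eps_tendsto :
    Tendsto (fun n : ℕ => Real.log n.factorial
      - (((n:ℝ) + 1/2) * Real.log n - n + Real.log (2*π)/2)) atTop (𝓝 0) := by
  have h1 := Stirling.tendsto_stirlingSeq_sqrt_pi
  have hsp : (0:ℝ) < Real.sqrt π := Real.sqrt_pos.2 pi_pos
  have h2 : Tendsto (fun n => Real.log (Stirling.stirlingSeq n)) atTop
      (𝓝 (Real.log (Real.sqrt π))) := h1.log hsp.ne'
  have h3 : Tendsto (fun n => Real.log (Stirling.stirlingSeq n) + (Real.log 2/2 - Real.log (2*π)/2))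
      atTop (𝓝 (Real.log (Real.sqrt π) + (Real.log 2/2 - Real.log (2*π)/2))) :=
    h2.add_const _
  have hval : Real.log (Real.sqrt π) + (Real.log 2/2 - Real.log (2*π)/2) = 0 := by
    rw [Real.log_sqrt pi_pos.le, Real.log_mul two_ne_zero pi_pos.ne']
    ring
  rw [hval] at h3
  refine h3.congr' ?_
  filter_upwards [eventually_ge_atTop 1] with n hn
  have hn0 : (0:ℝ) < n := by exact_mod_cast hn
  have hfac : (0:ℝ) < n.factorial := by exact_mod_cast n.factorial_pos
  have hs : Real.log (Stirling.stirlingSeq n)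
      = Real.log n.factorial - ((Real.log 2 + Real.log n)/2 + n * (Real.log n - 1)) := by
    rw [Stirling.stirlingSeq, Real.log_div hfac.ne' (by positivity),
      Real.log_mul (by positivity) (by positivity), Real.log_sqrt (by positivity),
      Real.log_pow, Real.log_div hn0.ne' (Real.exp_pos 1).ne', Real.log_exp,
      Real.log_mul two_ne_zero hn0.ne']
  rw [hs]
  ring

-- L3
lemma corr_tendsto {x : ℝ} (hx : 0 < x) :
    Tendsto (fun n : ℕ => (x + n + 1/2) * Real.log (1 + x/n)) atTop (𝓝 x) := by
  have hA : Tendsto (fun n : ℕ => (n:ℝ) * Real.log (1 + x/n)) atTop (𝓝 x) := by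
    have h1 := (Real.tendsto_one_add_div_pow_exp x).log (Real.exp_pos x).ne'
    rw [Real.log_exp] at h1
    refine h1.congr' ?_
    filter_upwards [eventually_ge_atTop 1] with n hn
    have hn0 : (0:ℝ) < n := by exact_mod_cast hn
    have : (0:ℝ) < 1 + x/n := by positivity
    rw [Real.log_pow]
  have hB : Tendsto (fun n : ℕ => Real.log (1 + x/n)) atTop (𝓝 0) := by
    have h0 : Tendsto (fun n : ℕ => 1 + x/(n:ℝ)) atTop (𝓝 1) := by
      have := tendsto_const_div_atTop_nhds_zero_nat x
      simpa using (tendsto_const_nhds (x := (1:ℝ))).add this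
    have := h0.log one_ne_zero
    simpa using this
  have hC : Tendsto (fun n : ℕ => (x + 1/2) * Real.log (1 + x/n)) atTop (𝓝 0) := by
    simpa using hB.const_mul (x + 1/2)
  have := hA.add hC
  rw [add_zero] at this
  refine this.congr (fun n => ?_)
  ring










/-- Stirling's formula with explicit error term: for every `α > 0` there is
`θ ∈ (0,1)` with `Γ(α) = √(2π) α^{α-1/2} exp(-α + θ/(12α))`. -/
theorem stirling_gamma (α : ℝ) (hα : 0 < α) :
    ∃ θ ∈ Set.Ioo (0 : ℝ) 1,
      Real.Gamma α
        = Real.sqrt (2 * π) * α ^ (α - 1 / 2) * Real.exp (-α + θ / (12 * α)) := by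
  set c : ℝ := Real.log (2*π)/2 with hc
  set g : ℕ → ℝ := fun k => (α + k + 1/2) * (Real.log (α+k+1) - Real.log (α+k)) - 1 with hg
  set T : ℕ → ℝ := fun n => ∑ k ∈ range n, g k with hT
  set L : ℝ := Real.log (Real.Gamma α) - (α - 1/2) * Real.log α + α - c with hL
  -- g bounds pointwise
  have hgpos : ∀ k : ℕ, 0 < g k := fun k => (g_bounds (by positivity : (0:ℝ) < α + k)).1
  have hgub : ∀ k : ℕ, g k < 1/(12*(α+k)) - 1/(12*(α+k+1)) :=
    fun k => (g_bounds (by positivity : (0:ℝ) < α + k)).2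
  -- T tends to L
  have hTL : Tendsto T atTop (𝓝 L) := by
    have hS := Real.BohrMollerup.tendsto_log_gamma hα
    have hE := eps_tendsto
    have hR := corr_tendsto hα
    have comb : Tendsto (fun n : ℕ =>
        Real.BohrMollerup.logGammaSeq α n
        - (Real.log n.factorial - (((n:ℝ) + 1/2) * Real.log n - n + c))
        - c - (α - 1/2) * Real.log α
        + ((α + n + 1/2) * Real.log (1 + α/n))) atTop (𝓝 L) := by
      have := (((hS.sub hE).sub_const c).sub_const ((α - 1/2) * Real.log α)).add hR
      convert this using 2
      rw [hL]
      ring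
    refine comb.congr' ?_
    filter_upwards [eventually_ge_atTop 1] with n hn
    have hn0 : (0:ℝ) < n := by exact_mod_cast hn
    have hlog_split : Real.log (α + n) = Real.log n + Real.log (1 + α/n) := by
      rw [← Real.log_mul hn0.ne' (by positivity)]
      field_simp
      ring
    have hSn : Real.BohrMollerup.logGammaSeq α n
        = α * Real.log n + Real.log n.factorial - ∑ m ∈ range (n+1), Real.log (α + m) := by
      rfl
    rw [hSn, Finset.sum_range_succ, hT]
    simp only [hg]
    rw [telescope α n, hlog_split]
    ring
  -- monotonicity of T
  have hmono : Monotone T := monotone_nat_of_le_succ (fun n => by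
    rw [hT]
    simp only [Finset.sum_range_succ]
    have := hgpos n
    linarith)
  -- lower bound : 0 < L
  have hlow : 0 < L := by
    have h1 : T 1 ≤ L := hmono.ge_of_tendsto hTL 1
    have : T 1 = g 0 := by simp [hT]
    rw [this] at h1
    exact lt_of_lt_of_le (hgpos 0) h1
  -- upper bound : L < 1/(12 α)
  have hup : L < 1/(12*α) := by
    set F : ℕ → ℝ := fun k => 1/(12*(α+1+k)) with hF
    have hLle : L ≤ g 0 + 1/(12*(α+1)) := by
      refine le_of_tendsto hTL ?_
      filter_upwards [eventually_ge_atTop 1] with n hn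
      obtain ⟨m, rfl⟩ := Nat.exists_eq_add_of_le hn
      have hTm : T (1+m) = ∑ k ∈ range (m+1), g k := by rw [hT, add_comm]
      rw [hTm, Finset.sum_range_succ']
      have hsum : ∑ k ∈ range m, g (k+1) ≤ ∑ k ∈ range m, (F k - F (k+1)) := by
        refine Finset.sum_le_sum (fun k _ => ?_)
        have e2 : F k - F (k+1) = 1/(12*(α+((k:ℝ)+1)))-1/(12*(α+((k:ℝ)+1)+1)) := by
          rw [hF]; push_cast; ring_nf
        rw [e2]
        have h3 := hgub (k+1)
        push_cast at h3
        exact h3.le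
      have htel : ∑ k ∈ range m, (F k - F (k+1)) = F 0 - F m := Finset.sum_range_sub' F m
      have hF0 : F 0 = 1/(12*(α+1)) := by rw [hF]; norm_num
      have hFm : 0 ≤ F m := by rw [hF]; positivity
      have : ∑ k ∈ range m, g (k+1) ≤ 1/(12*(α+1)) := by
        rw [htel, hF0] at hsum
        linarith
      linarith [this]
    have hg0 : g 0 < 1/(12*α) - 1/(12*(α+1)) := by
      have := hgub 0
      simpa using this
    calc L ≤ g 0 + 1/(12*(α+1)) := hLle
      _ < 1/(12*α) := by linarith
  -- assemble
  refine ⟨12*α*L, ⟨by positivity, ?_⟩, ?_⟩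
  · have : 12*α*L < 12*α*(1/(12*α)) := by
      apply mul_lt_mul_of_pos_left hup (by positivity)
    rwa [mul_one_div, div_self (by positivity : (12:ℝ)*α ≠ 0)] at this
  · have hθ : 12*α*L / (12*α) = L := by
      field_simp
    rw [hθ]
    have hΓ : Real.Gamma α = Real.exp (Real.log (Real.Gamma α)) :=
      (Real.exp_log (Real.Gamma_pos_of_pos hα)).symm
    rw [hΓ]
    have hlogΓ : Real.log (Real.Gamma α) = c + (α - 1/2) * Real.log α + (-α + L) := by
      rw [hL]; ring
    rw [hlogΓ, Real.exp_add, Real.exp_add]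
    congr 1
    congr 1
    · rw [hc]
      rw [← Real.log_sqrt (by positivity : (0:ℝ) ≤ 2*π)]
      exact Real.exp_log (Real.sqrt_pos.2 (by positivity))
    · rw [Real.rpow_def_of_pos hα]
      ring_nf
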